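/- The log-sum-exp function lse(x) = log(Σ_{i∈[n]} exp(x_i)) is 2-quasi-self-concordant in the ℓ∞ norm: for all x, u, h ∈ ℝ^n, |∇³lse(x)[u,u,h]| ≤ 2 ‖h‖∞ · uᵀ∇²lse(x)u. -/

import Mathlib

open Real Finset

noncomputable def Dc {n : ℕ} (c : Fin n → ℝ) : (Fin n → ℝ) →L[ℝ] ℝ :=
  ∑ i, c i • ContinuousLinearMap.proj i

lemma Dc_apply {n : ℕ} (c w : Fin n → ℝ) : Dc c w = ∑ i, c i * w i := by
  simp [Dc, ContinuousLinearMap.sum_apply]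

lemma hasFDerivAt_A {n : ℕ} (v y : Fin n → ℝ) :
    HasFDerivAt (fun z : Fin n → ℝ => ∑ i, Real.exp (z i) * v i)
      (Dc fun i => Real.exp (y i) * v i) y := by
  unfold Dc
  refine HasFDerivAt.fun_sum fun i _ => ?_
  have h1 : HasFDerivAt (fun z : Fin n → ℝ => z i) ((ContinuousLinearMap.proj i : (Fin n → ℝ) →L[ℝ] ℝ)) y :=
    by exact hasFDerivAt_apply i y
  have h2 := (h1.exp).mul_const (v i)
  convert h2 using 1
  all_goals try rfl
  rw [smul_smul, mul_comm]

lemma hasFDerivAt_S {n : ℕ} (y : Fin n → ℝ) :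
    HasFDerivAt (fun z : Fin n → ℝ => ∑ i, Real.exp (z i)) (Dc fun i => Real.exp (y i)) y := by
  simpa using hasFDerivAt_A (fun _ => 1) y

lemma fderiv_apply_comm {E F : Type*} [NormedAddCommGroup E] [NormedSpace ℝ E]
    [NormedAddCommGroup F] [NormedSpace ℝ F] {c : E → E →L[ℝ] F} {x : E}
    (hc : DifferentiableAt ℝ c x) (v w : E) :
    fderiv ℝ (fun y => c y v) x w = fderiv ℝ c x w v := by
  have h := hc.hasFDerivAt.clm_apply (hasFDerivAt_const v x)
  rw [h.fderiv]
  simp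

lemma fderiv_comp_clm {E F G : Type*} [NormedAddCommGroup E] [NormedSpace ℝ E]
    [NormedAddCommGroup F] [NormedSpace ℝ F] [NormedAddCommGroup G] [NormedSpace ℝ G]
    (L : F →L[ℝ] G) {g : E → F} {x : E} (hg : DifferentiableAt ℝ g x) :
    fderiv ℝ (fun z => L (g z)) x = L.comp (fderiv ℝ g x) :=
  (L.hasFDerivAt.comp x hg.hasFDerivAt).fderiv

lemma key2 {n : ℕ} (g : (Fin n → ℝ) → ℝ) (hg : ContDiff ℝ ⊤ g) (x u : Fin n → ℝ) :
    iteratedFDeriv ℝ 2 g x ![u, u] = fderiv ℝ (fun y => fderiv ℝ g y u) x u := by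
  rw [iteratedFDeriv_two_apply]
  have hd : DifferentiableAt ℝ (fderiv ℝ g) x :=
    ((hg.fderiv_right (m := 1) le_top).differentiable one_ne_zero).differentiableAt
  exact (fderiv_apply_comm hd u u).symm

lemma key3 {n : ℕ} (f : (Fin n → ℝ) → ℝ) (hf : ContDiff ℝ ⊤ f) (x u h : Fin n → ℝ) :
    iteratedFDeriv ℝ 3 f x ![u, u, h]
      = fderiv ℝ (fun y => fderiv ℝ (fun z => fderiv ℝ f z h) y u) x u := by
  have hd1 : Differentiable ℝ (fderiv ℝ f) := (hf.fderiv_right (m := 1) le_top).differentiable one_ne_zero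
  have hd2 : Differentiable ℝ (fderiv ℝ (fderiv ℝ f)) :=
    ((hf.fderiv_right (m := ⊤) le_top).fderiv_right (m := 1) le_top).differentiable one_ne_zero
  set L : ((Fin n → ℝ) →L[ℝ] ℝ) →L[ℝ] ℝ := ContinuousLinearMap.apply ℝ ℝ h with hL
  set L2 : ((Fin n → ℝ) →L[ℝ] ((Fin n → ℝ) →L[ℝ] ℝ)) →L[ℝ] ((Fin n → ℝ) →L[ℝ] ℝ) :=
    ContinuousLinearMap.compL ℝ (Fin n → ℝ) ((Fin n → ℝ) →L[ℝ] ℝ) ℝ L with hL2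
  have e0 : (fun z => fderiv ℝ f z h) = fun z => L (fderiv ℝ f z) := by
    funext z; simp [hL]
  have e1 : fderiv ℝ (fun z => fderiv ℝ f z h)
      = fun y => L2 (fderiv ℝ (fderiv ℝ f) y) := by
    funext y
    rw [e0, fderiv_comp_clm L (hd1 y)]
    rfl
  have stepA : iteratedFDeriv ℝ 3 f x ![u, u, h]
      = fderiv ℝ (fderiv ℝ (fderiv ℝ f)) x u u h := by
    rw [iteratedFDeriv_succ_apply_right, iteratedFDeriv_two_apply]
    rfl
  have hdφ : DifferentiableAt ℝ (fderiv ℝ (fun z => fderiv ℝ f z h)) x := by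
    rw [e1]
    exact (L2.differentiable.comp (𝕜 := ℝ) (E := Fin n → ℝ) (F := (Fin n → ℝ) →L[ℝ] (Fin n → ℝ) →L[ℝ] ℝ) (G := (Fin n → ℝ) →L[ℝ] ℝ) hd2).differentiableAt
  rw [stepA, fderiv_apply_comm hdφ u u, e1, fderiv_comp_clm (E := Fin n → ℝ) (F := (Fin n → ℝ) →L[ℝ] (Fin n → ℝ) →L[ℝ] ℝ) (G := (Fin n → ℝ) →L[ℝ] ℝ) L2 (hd2 x)]
  simp [hL2, hL]

lemma fderiv_lse_apply {n : ℕ} (hpos : ∀ y : Fin n → ℝ, (0:ℝ) < ∑ i, Real.exp (y i))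
    (y v : Fin n → ℝ) :
    fderiv ℝ (fun z : Fin n → ℝ => Real.log (∑ i, Real.exp (z i))) y v
      = (∑ i, Real.exp (y i) * v i) / (∑ i, Real.exp (y i)) := by
  have h' := (hasFDerivAt_S y).log (hpos y).ne'
  rw [h'.fderiv]
  simp [Dc_apply, smul_eq_mul, div_eq_inv_mul]

lemma fderiv_ratio_apply {n : ℕ} (hpos : ∀ y : Fin n → ℝ, (0:ℝ) < ∑ i, Real.exp (y i))
    (v y w : Fin n → ℝ) :
    fderiv ℝ (fun z : Fin n → ℝ => (∑ i, Real.exp (z i) * v i) / (∑ i, Real.exp (z i))) y w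
      = ((∑ i, Real.exp (y i)) * (∑ i, Real.exp (y i) * (v i * w i))
          - (∑ i, Real.exp (y i) * v i) * (∑ i, Real.exp (y i) * w i))
        / (∑ i, Real.exp (y i)) ^ 2 := by
  have hS := hasFDerivAt_S y
  have hA := hasFDerivAt_A v y
  have hinv : HasFDerivAt (fun z : Fin n → ℝ => (∑ i, Real.exp (z i))⁻¹)
      ((-((∑ i, Real.exp (y i)) ^ 2)⁻¹) • Dc fun i => Real.exp (y i)) y :=
    (hasDerivAt_inv (hpos y).ne').comp_hasFDerivAt y hS
  have hd := hA.mul hinv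
  have hfun : (fun z : Fin n → ℝ => (∑ i, Real.exp (z i) * v i) / (∑ i, Real.exp (z i)))
      = fun z => (∑ i, Real.exp (z i) * v i) * (∑ i, Real.exp (z i))⁻¹ :=
    funext fun z => div_eq_mul_inv _ _
  have hd' : HasFDerivAt
      (fun z : Fin n → ℝ => (∑ i, Real.exp (z i) * v i) / (∑ i, Real.exp (z i)))
      ((∑ i, Real.exp (y i) * v i) • ((-((∑ i, Real.exp (y i)) ^ 2)⁻¹) • Dc fun i => Real.exp (y i))
        + (∑ i, Real.exp (y i))⁻¹ • Dc fun i => Real.exp (y i) * v i) y := by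
    rw [hfun]; exact hd
  rw [hd'.fderiv]
  have h1 : (∑ i, Real.exp (y i)) ≠ 0 := (hpos y).ne'
  simp only [ContinuousLinearMap.add_apply, ContinuousLinearMap.smul_apply, Dc_apply,
    smul_eq_mul, mul_assoc]
  field_simp
  ring

lemma fderiv_psi_apply {n : ℕ} (hpos : ∀ y : Fin n → ℝ, (0:ℝ) < ∑ i, Real.exp (y i))
    (h u x : Fin n → ℝ) :
    fderiv ℝ (fun y : Fin n → ℝ =>
        ((∑ i, Real.exp (y i)) * (∑ i, Real.exp (y i) * (h i * u i))
          - (∑ i, Real.exp (y i) * h i) * (∑ i, Real.exp (y i) * u i))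
        / (∑ i, Real.exp (y i)) ^ 2) x u
      = ((∑ i, Real.exp (x i)) ^ 2 * (∑ i, Real.exp (x i) * (h i * (u i * u i)))
          - (∑ i, Real.exp (x i)) * (∑ i, Real.exp (x i) * h i) * (∑ i, Real.exp (x i) * (u i * u i))
          - 2 * (∑ i, Real.exp (x i)) * (∑ i, Real.exp (x i) * u i) * (∑ i, Real.exp (x i) * (h i * u i))
          + 2 * (∑ i, Real.exp (x i) * h i) * (∑ i, Real.exp (x i) * u i) ^ 2)
        / (∑ i, Real.exp (x i)) ^ 3 := by
  have hS := hasFDerivAt_S x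
  have hAhu := hasFDerivAt_A (fun i => h i * u i) x
  have hAh := hasFDerivAt_A h x
  have hAu := hasFDerivAt_A u x
  have hnum := (hS.fun_mul hAhu).fun_sub (hAh.fun_mul hAu)
  have hpow : HasFDerivAt (fun y : Fin n → ℝ => (∑ i, Real.exp (y i)) ^ 2)
      ((∑ i, Real.exp (x i)) • Dc (fun i => Real.exp (x i))
        + (∑ i, Real.exp (x i)) • Dc fun i => Real.exp (x i)) x := by
    have := (hasFDerivAt_S x).fun_mul (hasFDerivAt_S x)
    simpa [pow_two] using this
  have hinv2 : HasFDerivAt (fun y : Fin n → ℝ => ((∑ i, Real.exp (y i)) ^ 2)⁻¹)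
      ((-(((∑ i, Real.exp (x i)) ^ 2) ^ 2)⁻¹) •
        ((∑ i, Real.exp (x i)) • Dc (fun i => Real.exp (x i))
          + (∑ i, Real.exp (x i)) • Dc fun i => Real.exp (x i))) x :=
    (hasDerivAt_inv (pow_ne_zero 2 (hpos x).ne')).comp_hasFDerivAt x hpow
  have hd := hnum.fun_mul hinv2
  have hfun : (fun y : Fin n → ℝ =>
      ((∑ i, Real.exp (y i)) * (∑ i, Real.exp (y i) * (h i * u i))
        - (∑ i, Real.exp (y i) * h i) * (∑ i, Real.exp (y i) * u i))
      / (∑ i, Real.exp (y i)) ^ 2)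
      = fun y => ((∑ i, Real.exp (y i)) * (∑ i, Real.exp (y i) * (h i * u i))
        - (∑ i, Real.exp (y i) * h i) * (∑ i, Real.exp (y i) * u i))
        * ((∑ i, Real.exp (y i)) ^ 2)⁻¹ := funext fun z => div_eq_mul_inv _ _
  rw [hfun, hd.fderiv]
  have h1 : (∑ i, Real.exp (x i)) ≠ 0 := (hpos x).ne'
  simp only [ContinuousLinearMap.add_apply, ContinuousLinearMap.sub_apply,
    ContinuousLinearMap.smul_apply, Dc_apply, smul_eq_mul, mul_assoc]
  field_simp
  ring

lemma final_ineq {n : ℕ} (e u h : Fin n → ℝ) (he : ∀ i, 0 < e i)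
    (hS : (0:ℝ) < ∑ i, e i) (M : ℝ) (hM0 : 0 ≤ M) (hM : ∀ i, |h i| ≤ M) :
    |((∑ i, e i) ^ 2 * (∑ i, e i * (h i * (u i * u i)))
        - (∑ i, e i) * (∑ i, e i * h i) * (∑ i, e i * (u i * u i))
        - 2 * (∑ i, e i) * (∑ i, e i * u i) * (∑ i, e i * (h i * u i))
        + 2 * (∑ i, e i * h i) * (∑ i, e i * u i) ^ 2) / (∑ i, e i) ^ 3|
      ≤ 2 * M * (((∑ i, e i) * (∑ i, e i * (u i * u i))
          - (∑ i, e i * u i) * (∑ i, e i * u i)) / (∑ i, e i) ^ 2) := by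
  set S := ∑ i, e i with hSdef
  set c := (∑ i, e i * u i) / S with hc
  set b := (∑ i, e i * h i) / S with hb
  have hSne : S ≠ 0 := hS.ne'
  have expand3 : (∑ i, e i * ((u i - c) ^ 2 * (h i - b)))
      = (∑ i, e i * (h i * (u i * u i))) - b * (∑ i, e i * (u i * u i))
        - 2 * c * (∑ i, e i * (h i * u i)) + (2 * (c * b)) * (∑ i, e i * u i)
        + c ^ 2 * (∑ i, e i * h i) - (c ^ 2 * b) * (∑ i, e i) := by
    have hterm : ∀ i ∈ Finset.univ, e i * ((u i - c) ^ 2 * (h i - b))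
        = e i * (h i * (u i * u i)) - b * (e i * (u i * u i))
          - 2 * c * (e i * (h i * u i)) + (2 * (c * b)) * (e i * u i)
          + c ^ 2 * (e i * h i) - (c ^ 2 * b) * (e i) := fun i _ => by ring
    rw [Finset.sum_congr rfl hterm]
    simp [Finset.sum_add_distrib, Finset.sum_sub_distrib, ← Finset.mul_sum]
  have expand2 : (∑ i, e i * (u i - c) ^ 2)
      = (∑ i, e i * (u i * u i)) - 2 * c * (∑ i, e i * u i) + c ^ 2 * S := by
    have hterm : ∀ i ∈ Finset.univ, e i * (u i - c) ^ 2
        = e i * (u i * u i) - 2 * c * (e i * u i) + c ^ 2 * e i := fun i _ => by ring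
    rw [Finset.sum_congr rfl hterm]
    simp [Finset.sum_add_distrib, Finset.sum_sub_distrib, ← Finset.mul_sum, hSdef]
  have id3 : (S ^ 2 * (∑ i, e i * (h i * (u i * u i)))
        - S * (∑ i, e i * h i) * (∑ i, e i * (u i * u i))
        - 2 * S * (∑ i, e i * u i) * (∑ i, e i * (h i * u i))
        + 2 * (∑ i, e i * h i) * (∑ i, e i * u i) ^ 2) / S ^ 3
      = (∑ i, e i * ((u i - c) ^ 2 * (h i - b))) / S := by
    rw [expand3, hc, hb]
    field_simp
    ring
  have id2 : (S * (∑ i, e i * (u i * u i)) - (∑ i, e i * u i) * (∑ i, e i * u i)) / S ^ 2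
      = (∑ i, e i * (u i - c) ^ 2) / S := by
    rw [expand2, hc]
    field_simp
    ring
  rw [id3, id2]
  have hbabs : |b| ≤ M := by
    rw [hb, abs_div, abs_of_pos hS, div_le_iff₀ hS]
    calc |∑ i, e i * h i| ≤ ∑ i, |e i * h i| := Finset.abs_sum_le_sum_abs _ _
      _ ≤ ∑ i, e i * M := Finset.sum_le_sum fun i _ => by
            rw [abs_mul, abs_of_pos (he i)]
            exact mul_le_mul_of_nonneg_left (hM i) (he i).le
      _ = M * S := by rw [← Finset.sum_mul, mul_comm]
  have key : |∑ i, e i * ((u i - c) ^ 2 * (h i - b))|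
      ≤ 2 * M * (∑ i, e i * (u i - c) ^ 2) := by
    calc |∑ i, e i * ((u i - c) ^ 2 * (h i - b))|
        ≤ ∑ i, |e i * ((u i - c) ^ 2 * (h i - b))| := Finset.abs_sum_le_sum_abs _ _
      _ ≤ ∑ i, e i * ((u i - c) ^ 2 * (2 * M)) := by
          refine Finset.sum_le_sum fun i _ => ?_
          rw [abs_mul, abs_mul, abs_of_pos (he i), abs_of_nonneg (sq_nonneg _)]
          have hhb : |h i - b| ≤ 2 * M := by
            have h1 : |h i - b| ≤ |h i| + |b| := by
              rw [sub_eq_add_neg]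
              simpa [abs_neg] using abs_add_le (h i) (-b)
            linarith [hM i]
          gcongr
          exact (he i).le
      _ = 2 * M * (∑ i, e i * (u i - c) ^ 2) := by
          rw [Finset.mul_sum]
          exact Finset.sum_congr rfl fun i _ => by ring
  rw [abs_div, abs_of_pos hS, ← mul_div_assoc]
  exact div_le_div_of_nonneg_right key hS.le

/-- `lse` is 2-quasi-self-concordant in the `ℓ∞` norm:
`|∇³lse(x)[u,u,h]| ≤ 2 ‖h‖∞ uᵀ∇²lse(x)u`. -/
theorem stmt7 {n : ℕ} (x u h : Fin n → ℝ) :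
    |iteratedFDeriv ℝ 3 (fun y : Fin n → ℝ => Real.log (∑ i, Real.exp (y i))) x ![u, u, h]|
      ≤ 2 * ‖h‖ *
          iteratedFDeriv ℝ 2 (fun y : Fin n → ℝ => Real.log (∑ i, Real.exp (y i))) x ![u, u] := by
  rcases Nat.eq_zero_or_pos n with hn | hn
  · subst hn
    have hconst : (fun y : Fin 0 → ℝ => Real.log (∑ i, Real.exp (y i)))
        = fun _ => Real.log 0 := by
      funext y; simp
    rw [hconst, iteratedFDeriv_const_of_ne (by norm_num), iteratedFDeriv_const_of_ne (by norm_num)]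
    simp
  · have hpos : ∀ y : Fin n → ℝ, (0:ℝ) < ∑ i, Real.exp (y i) := fun y =>
      Finset.sum_pos (fun i _ => Real.exp_pos _)
        (by haveI : Nonempty (Fin n) := Fin.pos_iff_nonempty.mp hn; exact Finset.univ_nonempty)
    have hf : ContDiff ℝ ⊤ (fun y : Fin n → ℝ => Real.log (∑ i, Real.exp (y i))) := by
      apply ContDiff.log
      · exact ContDiff.sum fun i _ =>
          Real.contDiff_exp.comp (ContinuousLinearMap.proj i
            : (Fin n → ℝ) →L[ℝ] ℝ).contDiff
      · exact fun y => (hpos y).ne'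
    rw [key3 _ hf x u h, key2 _ hf x u]
    have e0 : (fun z : Fin n → ℝ =>
        fderiv ℝ (fun y : Fin n → ℝ => Real.log (∑ i, Real.exp (y i))) z h)
        = fun z => (∑ i, Real.exp (z i) * h i) / (∑ i, Real.exp (z i)) :=
      funext fun z => fderiv_lse_apply hpos z h
    have e0u : (fun z : Fin n → ℝ =>
        fderiv ℝ (fun y : Fin n → ℝ => Real.log (∑ i, Real.exp (y i))) z u)
        = fun z => (∑ i, Real.exp (z i) * u i) / (∑ i, Real.exp (z i)) :=
      funext fun z => fderiv_lse_apply hpos z u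
    rw [e0, e0u]
    have e1 : (fun y : Fin n → ℝ => fderiv ℝ
        (fun z : Fin n → ℝ => (∑ i, Real.exp (z i) * h i) / (∑ i, Real.exp (z i))) y u)
        = fun y => ((∑ i, Real.exp (y i)) * (∑ i, Real.exp (y i) * (h i * u i))
            - (∑ i, Real.exp (y i) * h i) * (∑ i, Real.exp (y i) * u i))
          / (∑ i, Real.exp (y i)) ^ 2 :=
      funext fun y => fderiv_ratio_apply hpos h y u
    rw [e1, fderiv_psi_apply hpos h u x, fderiv_ratio_apply hpos u x u]
    exact final_ineq (fun i => Real.exp (x i)) u h (fun i => Real.exp_pos _) (hpos x)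
      ‖h‖ (norm_nonneg h) (fun i => by simpa using norm_le_pi_norm h i)
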